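/- Let T > 0, let N : [0, T] → [0, ∞) be continuous, and let R : [0, T] → (0, 1] be differentiable and satisfy the differential inequality R'(t) ≥ -N(t) · R(t) · (1 - log R(t)) for all t ∈ [0, T]. Then for every t ∈ [0, T], 1 - log R(t) ≤ (1 - log R(0)) · exp(∫_0^t N(τ) dτ); equivalently, R(t) ≥ exp(1 - (1 - log R(0)) · exp(∫_0^t N(τ) dτ)). In particular R remains bounded below by a strictly positive quantity depending only on R(0) and ∫_0^T N. -/

import Mathlib

/-- Osgood-type lower bound: if `R : [0, T] → (0, 1]` satisfies the differential
inequality `R'(t) ≥ -N(t) R(t) (1 - log R(t))` with `N` continuous and nonnegative,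
then `1 - log R(t) ≤ (1 - log R(0)) exp(∫₀ᵗ N)`, equivalently
`R(t) ≥ exp(1 - (1 - log R(0)) exp(∫₀ᵗ N))`. -/
theorem osgood_log_lower_bound
    (T : ℝ) (hT : 0 < T)
    (N : ℝ → ℝ) (hNcont : ContinuousOn N (Set.Icc 0 T))
    (hNpos : ∀ t ∈ Set.Icc (0 : ℝ) T, 0 ≤ N t)
    (R R' : ℝ → ℝ)
    (hRpos : ∀ t ∈ Set.Icc (0 : ℝ) T, 0 < R t)
    (hRle : ∀ t ∈ Set.Icc (0 : ℝ) T, R t ≤ 1)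
    (hRderiv : ∀ t ∈ Set.Icc (0 : ℝ) T, HasDerivWithinAt R (R' t) (Set.Icc 0 T) t)
    (hineq : ∀ t ∈ Set.Icc (0 : ℝ) T,
      R' t ≥ -N t * R t * (1 - Real.log (R t))) :
    ∀ t ∈ Set.Icc (0 : ℝ) T,
      1 - Real.log (R t) ≤ (1 - Real.log (R 0)) * Real.exp (∫ τ in (0 : ℝ)..t, N τ) ∧
      R t ≥ Real.exp (1 - (1 - Real.log (R 0)) * Real.exp (∫ τ in (0 : ℝ)..t, N τ)) := by
  set F : ℝ → ℝ := fun t => ∫ τ in (0 : ℝ)..t, N τ with hFdef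
  set v : ℝ → ℝ := fun t => (1 - Real.log (R t)) * Real.exp (-(F t)) with hvdef
  have h0T : (0 : ℝ) ∈ Set.Icc (0 : ℝ) T := ⟨le_refl 0, hT.le⟩
  have hRcont : ContinuousOn R (Set.Icc 0 T) := fun t ht =>
    (hRderiv t ht).continuousWithinAt
  have hIcc_eq : Set.uIcc (0 : ℝ) T = Set.Icc 0 T := Set.uIcc_of_le hT.le
  have hFcont : ContinuousOn F (Set.Icc 0 T) := by
    have := intervalIntegral.continuousOn_primitive_interval
      (f := N) (μ := MeasureTheory.volume) (a := 0) (b := T)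
      (by rw [hIcc_eq]; exact hNcont.integrableOn_Icc.congr_set_ae (Filter.EventuallyEq.refl _ _))
    rwa [hIcc_eq] at this
  have hvcont : ContinuousOn v (Set.Icc 0 T) := by
    apply ContinuousOn.mul
    · exact continuousOn_const.sub (Real.continuousOn_log.comp hRcont
        (fun t ht => (hRpos t ht).ne'))
    · exact Real.continuous_exp.comp_continuousOn hFcont.neg
  have hint : Set.Ioo (0 : ℝ) T ⊆ Set.Icc 0 T := Set.Ioo_subset_Icc_self
  have hderiv : ∀ t ∈ Set.Ioo (0 : ℝ) T,
      HasDerivAt v ((-(R' t / R t) - N t * (1 - Real.log (R t))) * Real.exp (-(F t))) t := by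
    intro t ht
    have hmem : Set.Icc (0 : ℝ) T ∈ nhds t := Icc_mem_nhds ht.1 ht.2
    have hR : HasDerivAt R (R' t) t := (hRderiv t (hint ht)).hasDerivAt hmem
    have hy : HasDerivAt (fun s => 1 - Real.log (R s)) (-(R' t / R t)) t := by
      have := (hR.log (hRpos t (hint ht)).ne').const_sub 1
      simpa using this
    have hNint : IntervalIntegrable N MeasureTheory.volume 0 t := by
      apply ContinuousOn.intervalIntegrable
      apply hNcont.mono
      rw [Set.uIcc_of_le ht.1.le]
      exact Set.Icc_subset_Icc le_rfl ht.2.le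
    have hF : HasDerivAt F (N t) t := by
      apply intervalIntegral.integral_hasDerivAt_right hNint
      · exact (hNcont.mono hint).stronglyMeasurableAtFilter isOpen_Ioo t ht
      · exact (hNcont t (hint ht)).continuousAt hmem
    have hg : HasDerivAt (fun s => Real.exp (-(F s))) (-(N t) * Real.exp (-(F t))) t := by
      have := (hF.neg).exp
      simpa [mul_comm] using this
    have := hy.mul hg
    convert this using 1
    · rfl
    · rfl
    · rfl
    · ring
  have hanti : AntitoneOn v (Set.Icc 0 T) := by
    apply antitoneOn_of_deriv_nonpos (convex_Icc 0 T) hvcont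
    · intro t ht
      rw [interior_Icc] at ht
      exact ((hderiv t ht).differentiableAt).differentiableWithinAt
    · intro t ht
      rw [interior_Icc] at ht
      rw [(hderiv t ht).deriv]
      have htI := hint ht
      have hRp := hRpos t htI
      have h1 : R' t / R t ≥ -N t * (1 - Real.log (R t)) := by
        rw [ge_iff_le, le_div_iff₀ hRp]
        calc -N t * (1 - Real.log (R t)) * R t
            = -N t * R t * (1 - Real.log (R t)) := by ring
          _ ≤ R' t := hineq t htI
      have h2 : -(R' t / R t) - N t * (1 - Real.log (R t)) ≤ 0 := by linarith
      exact mul_nonpos_of_nonpos_of_nonneg h2 (Real.exp_pos _).le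
  intro t ht
  have hv : v t ≤ v 0 := hanti h0T ht ht.1
  have hF0 : F 0 = 0 := by simp [hFdef]
  have hv0 : v 0 = 1 - Real.log (R 0) := by simp [hvdef, hF0]
  have hmain : 1 - Real.log (R t) ≤ (1 - Real.log (R 0)) * Real.exp (F t) := by
    have := mul_le_mul_of_nonneg_right hv (Real.exp_pos (F t)).le
    rw [hv0] at this
    calc 1 - Real.log (R t)
        = (1 - Real.log (R t)) * Real.exp (-(F t)) * Real.exp (F t) := by
          rw [mul_assoc, ← Real.exp_add]; simp
      _ ≤ (1 - Real.log (R 0)) * Real.exp (F t) := this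
  refine ⟨hmain, ?_⟩
  have : Real.exp (1 - (1 - Real.log (R 0)) * Real.exp (F t)) ≤ Real.exp (Real.log (R t)) :=
    Real.exp_le_exp.2 (by linarith)
  rwa [Real.exp_log (hRpos t ht)] at this
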